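/- If g is an operator geodesically concave function with positive definite values, then its adjoint g*(t) = 1/g(1/t) is operator geodesically convex, and moreover satisfies the refinement g*(A #_v B) ≤ g*(A) !_v g*(B) ≤ (1-v)g*(A) + v g*(B), where X !_v Y = ((1-v)X^(-1) + vY^(-1))^(-1) is the weighted harmonic mean. -/

import Mathlib

open scoped Matrix

/-- Weighted matrix geometric mean `A #_v B = A^(1/2) (A^(-1/2) B A^(-1/2))^v A^(1/2)`,
where real powers are taken via the continuous functional calculus. -/
noncomputable def mpow {m : ℕ} (A : Matrix (Fin m) (Fin m) ℝ) (r : ℝ) :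
    Matrix (Fin m) (Fin m) ℝ :=
  cfc (fun x : ℝ => x ^ r) A

noncomputable def geomMean {m : ℕ} (v : ℝ) (A B : Matrix (Fin m) (Fin m) ℝ) :
    Matrix (Fin m) (Fin m) ℝ :=
  mpow A (1/2) * mpow (mpow A (-(1/2)) * B * mpow A (-(1/2))) v * mpow A (1/2)

/-- Weighted matrix harmonic mean `X !_v Y = ((1-v) X⁻¹ + v Y⁻¹)⁻¹`. -/
noncomputable def harmMean {m : ℕ} (v : ℝ) (X Y : Matrix (Fin m) (Fin m) ℝ) :
    Matrix (Fin m) (Fin m) ℝ :=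
  ((1 - v) • X⁻¹ + v • Y⁻¹)⁻¹

lemma contOn_finite {s : Set ℝ} (hs : s.Finite) (f : ℝ → ℝ) : ContinuousOn f s := by
  rw [continuousOn_iff_continuous_restrict]
  have := hs.to_subtype
  have : DiscreteTopology s := Finite.instDiscreteTopology
  exact continuous_of_discreteTopology

lemma contOnSpec {m : ℕ} (f : ℝ → ℝ) (A : Matrix (Fin m) (Fin m) ℝ) :
    ContinuousOn f (spectrum ℝ A) :=
  contOn_finite A.finite_real_spectrum f

lemma spec_pos {m : ℕ} {A : Matrix (Fin m) (Fin m) ℝ} (hA : A.PosDef) :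
    ∀ x ∈ spectrum ℝ A, 0 < x := by
  intro x hx
  rw [hA.1.spectrum_real_eq_range_eigenvalues] at hx
  obtain ⟨i, rfl⟩ := hx
  exact hA.eigenvalues_pos i

lemma posSemidef_smul' {m : ℕ} {c : ℝ} {M : Matrix (Fin m) (Fin m) ℝ} (hc : 0 ≤ c)
    (hM : M.PosSemidef) : (c • M).PosSemidef := by
  refine Matrix.posSemidef_iff_dotProduct_mulVec.mpr ⟨?_, fun x => ?_⟩
  · unfold Matrix.IsHermitian
    rw [Matrix.conjTranspose_smul, hM.1]
    simp
  · rw [Matrix.smul_mulVec, dotProduct_smul]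
    exact mul_nonneg hc ((Matrix.posSemidef_iff_dotProduct_mulVec.mp hM).2 x)

lemma posDef_smul' {m : ℕ} {c : ℝ} {M : Matrix (Fin m) (Fin m) ℝ} (hc : 0 < c)
    (hM : M.PosDef) : (c • M).PosDef := by
  refine Matrix.posDef_iff_dotProduct_mulVec.mpr ⟨?_, fun x hx => ?_⟩
  · unfold Matrix.IsHermitian
    rw [Matrix.conjTranspose_smul, hM.1]
    simp
  · rw [Matrix.smul_mulVec, dotProduct_smul]
    exact mul_pos hc (hM.dotProduct_mulVec_pos hx)

lemma posDef_conj' {m : ℕ} {D U : Matrix (Fin m) (Fin m) ℝ} (hD : D.PosDef) (hU : IsUnit U) :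
    (Uᴴ * D * U).PosDef := by
  refine Matrix.PosDef.of_dotProduct_mulVec_pos (Matrix.isHermitian_conjTranspose_mul_mul U hD.1) fun x hx => ?_
  have hinj := Matrix.mulVec_injective_iff_isUnit.mpr hU
  have hx' : U *ᵥ x ≠ 0 := fun h => hx (hinj (by simp [h]))
  simpa only [Matrix.star_mulVec, Matrix.dotProduct_mulVec, Matrix.vecMul_vecMul] using
    hD.dotProduct_mulVec_pos hx'

lemma cfc_posDef {m : ℕ} {A : Matrix (Fin m) (Fin m) ℝ} {f : ℝ → ℝ} (hA : A.PosDef)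
    (hf : ∀ x ∈ spectrum ℝ A, 0 < f x) : (cfc f A).PosDef := by
  rw [Matrix.IsHermitian.cfc_eq hA.1]
  unfold Matrix.IsHermitian.cfc
  have hdiag : (Matrix.diagonal (RCLike.ofReal ∘ f ∘ hA.1.eigenvalues) :
      Matrix (Fin m) (Fin m) ℝ).PosDef := by
    rw [Matrix.posDef_diagonal_iff]
    intro i
    simpa using hf _ (hA.1.eigenvalues_mem_spectrum_real i)
  have hU : IsUnit (star (hA.1.eigenvectorUnitary : Matrix (Fin m) (Fin m) ℝ)) := by
    exact ⟨⟨star (hA.1.eigenvectorUnitary : Matrix (Fin m) (Fin m) ℝ),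
      (hA.1.eigenvectorUnitary : Matrix (Fin m) (Fin m) ℝ),
      Unitary.star_mul_self_of_mem (SetLike.coe_mem _),
      Unitary.mul_star_self_of_mem (SetLike.coe_mem _)⟩, rfl⟩
  have := posDef_conj' hdiag hU
  simpa [Matrix.star_eq_conjTranspose] using this


lemma mpow_posDef {m : ℕ} {A : Matrix (Fin m) (Fin m) ℝ} (hA : A.PosDef) (r : ℝ) :
    (mpow A r).PosDef :=
  cfc_posDef hA fun x hx => Real.rpow_pos_of_pos (spec_pos hA x hx) r

lemma mpow_mul_mpow {m : ℕ} {A : Matrix (Fin m) (Fin m) ℝ} (hA : A.PosDef) (r s : ℝ) :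
    mpow A r * mpow A s = mpow A (r + s) := by
  unfold mpow
  rw [← cfc_mul _ _ A (contOnSpec _ A) (contOnSpec _ A)]
  apply cfc_congr
  intro x hx
  exact (Real.rpow_add (spec_pos hA x hx) r s).symm

lemma mpow_zero' {m : ℕ} {A : Matrix (Fin m) (Fin m) ℝ} (hA : A.PosDef) :
    mpow A 0 = 1 := by
  unfold mpow
  rw [cfc_congr (g := fun _ : ℝ => (1 : ℝ)) fun x hx => Real.rpow_zero x]
  exact cfc_const_one ℝ A hA.1

lemma mpow_inv {m : ℕ} {A : Matrix (Fin m) (Fin m) ℝ} (hA : A.PosDef) (r : ℝ) :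
    (mpow A r)⁻¹ = mpow A (-r) := by
  apply Matrix.inv_eq_right_inv
  rw [mpow_mul_mpow hA, add_neg_cancel, mpow_zero' hA]

lemma mpow_matrix_inv {m : ℕ} {A : Matrix (Fin m) (Fin m) ℝ} (hA : A.PosDef) (s : ℝ) :
    mpow A⁻¹ s = mpow A (-s) := by
  have hu : A⁻¹ = ↑(hA.isUnit.unit⁻¹) := by
    rw [Matrix.coe_units_inv, IsUnit.unit_spec]
  have key := cfc_comp_inv (R := ℝ) (fun x : ℝ => x ^ s) hA.isUnit.unit
    (contOn_finite (Matrix.finite_real_spectrum.image _) _) hA.1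
  unfold mpow
  rw [hu, ← key]
  apply cfc_congr
  intro x hx
  have hx' := spec_pos hA x hx
  show x⁻¹ ^ s = x ^ (-s)
  rw [Real.inv_rpow hx'.le, ← Real.rpow_neg hx'.le]

lemma inner_posDef {m : ℕ} {A B : Matrix (Fin m) (Fin m) ℝ} (hA : A.PosDef) (hB : B.PosDef) :
    (mpow A (-(1/2)) * B * mpow A (-(1/2))).PosDef := by
  have hX := mpow_posDef hA (-(1/2))
  have h := posDef_conj' hB hX.isUnit
  rwa [hX.1.eq] at h

lemma geomMean_posDef {m : ℕ} {A B : Matrix (Fin m) (Fin m) ℝ} (hA : A.PosDef) (hB : B.PosDef)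
    (v : ℝ) : (geomMean v A B).PosDef := by
  have hM := mpow_posDef (inner_posDef hA hB) v
  have hX := mpow_posDef hA (1/2)
  have h := posDef_conj' hM hX.isUnit
  rwa [hX.1.eq] at h

lemma geomMean_inv {m : ℕ} {A B : Matrix (Fin m) (Fin m) ℝ} (hA : A.PosDef) (hB : B.PosDef)
    (v : ℝ) : (geomMean v A B)⁻¹ = geomMean v A⁻¹ B⁻¹ := by
  have hM : (mpow A (-(1/2)) * B * mpow A (-(1/2))).PosDef := inner_posDef hA hB
  have hMinv : (mpow A (-(1/2)) * B * mpow A (-(1/2)))⁻¹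
      = mpow A (1/2) * B⁻¹ * mpow A (1/2) := by
    rw [Matrix.mul_inv_rev, Matrix.mul_inv_rev, mpow_inv hA, neg_neg, mul_assoc]
  unfold geomMean
  rw [Matrix.mul_inv_rev, Matrix.mul_inv_rev, mpow_inv hA, mpow_inv hM,
    mpow_matrix_inv hA, mpow_matrix_inv hA, neg_neg,
    ← mpow_matrix_inv hM v, hMinv, mul_assoc, mul_assoc]

lemma inv_antitone' {m : ℕ} {P Q : Matrix (Fin m) (Fin m) ℝ} (hP : P.PosDef) (hQ : Q.PosDef)
    (h : (Q - P).PosSemidef) : (P⁻¹ - Q⁻¹).PosSemidef := by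
  letI := hP.isUnit.invertible
  letI := hQ.isUnit.invertible
  have hD : (P⁻¹ - Q⁻¹).IsHermitian := hP.1.inv.sub hQ.1.inv
  have key : P⁻¹ - Q⁻¹ = (P⁻¹ - Q⁻¹)ᴴ * P * (P⁻¹ - Q⁻¹) + (Q⁻¹)ᴴ * (Q - P) * Q⁻¹ := by
    rw [hD.eq, hQ.1.inv.eq]
    simp only [Matrix.sub_mul, Matrix.mul_sub, Matrix.mul_assoc,
      Matrix.mul_inv_cancel_left_of_invertible, Matrix.inv_mul_cancel_left_of_invertible,
      Matrix.mul_inv_of_invertible, Matrix.inv_mul_of_invertible, Matrix.mul_one, Matrix.one_mul]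
    abel
  rw [key]
  exact ((hP.posSemidef.conjTranspose_mul_mul_same _).add
    (h.conjTranspose_mul_mul_same _))

lemma am_hm' {m : ℕ} {P Q : Matrix (Fin m) (Fin m) ℝ} (hP : P.PosDef) (hQ : Q.PosDef)
    {v : ℝ} (hv : v ∈ Set.Icc (0:ℝ) 1) (hS : ((1 - v) • P + v • Q).PosDef) :
    ((1 - v) • P⁻¹ + v • Q⁻¹ - ((1 - v) • P + v • Q)⁻¹).PosSemidef := by
  set S : Matrix (Fin m) (Fin m) ℝ := (1 - v) • P + v • Q with hSdef
  letI := hP.isUnit.invertible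
  letI := hQ.isUnit.invertible
  letI := hS.isUnit.invertible
  have hs : (1 - v) • (S⁻¹ * (P * S⁻¹)) + v • (S⁻¹ * (Q * S⁻¹)) = S⁻¹ := by
    have h1 : S⁻¹ * (S * S⁻¹) = S⁻¹ := by
      rw [Matrix.mul_inv_of_invertible, Matrix.mul_one]
    calc (1 - v) • (S⁻¹ * (P * S⁻¹)) + v • (S⁻¹ * (Q * S⁻¹))
        = S⁻¹ * (((1 - v) • P + v • Q) * S⁻¹) := by
          simp only [Matrix.add_mul, Matrix.mul_add, Matrix.smul_mul, Matrix.mul_smul]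
      _ = S⁻¹ := h1
  have key : (1 - v) • P⁻¹ + v • Q⁻¹ - S⁻¹
      = (1 - v) • ((P⁻¹ - S⁻¹)ᴴ * P * (P⁻¹ - S⁻¹))
        + v • ((Q⁻¹ - S⁻¹)ᴴ * Q * (Q⁻¹ - S⁻¹)) := by
    rw [(hP.1.inv.sub hS.1.inv).eq, (hQ.1.inv.sub hS.1.inv).eq]
    simp only [Matrix.sub_mul, Matrix.mul_sub, Matrix.mul_assoc,
      Matrix.mul_inv_cancel_left_of_invertible, Matrix.inv_mul_cancel_left_of_invertible,
      Matrix.mul_inv_of_invertible, Matrix.inv_mul_of_invertible,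
      Matrix.mul_one, Matrix.one_mul]
    set a := S⁻¹ * (P * S⁻¹) with ha
    set b := S⁻¹ * (Q * S⁻¹) with hb
    rw [← hs]
    module
  rw [key]
  exact (posSemidef_smul' (by linarith [hv.2]) (hP.posSemidef.conjTranspose_mul_mul_same _)).add
    (posSemidef_smul' hv.1 (hQ.posSemidef.conjTranspose_mul_mul_same _))

/-- The adjoint `g*(A) = (g(A⁻¹))⁻¹` of an operator geodesically concave function `g` is
operator geodesically convex, with the refinement
`g*(A #_v B) ≤ g*(A) !_v g*(B) ≤ (1-v) g*(A) + v g*(B)`. -/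
theorem adjoint_operatorGeodesicallyConvex (g : ℝ → ℝ)
    (hgpos : ∀ (m : ℕ) (A : Matrix (Fin m) (Fin m) ℝ), A.PosDef → (cfc g A).PosDef)
    (hggc : ∀ (m : ℕ) (A B : Matrix (Fin m) (Fin m) ℝ), A.PosDef → B.PosDef →
      ∀ v : ℝ, v ∈ Set.Icc (0 : ℝ) 1 →
      (cfc g (geomMean v A B) - ((1 - v) • cfc g A + v • cfc g B)).PosSemidef) :
    ∀ (m : ℕ) (A B : Matrix (Fin m) (Fin m) ℝ), A.PosDef → B.PosDef →
      ∀ v : ℝ, v ∈ Set.Icc (0 : ℝ) 1 →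
      (harmMean v (cfc g A⁻¹)⁻¹ (cfc g B⁻¹)⁻¹
          - (cfc g (geomMean v A B)⁻¹)⁻¹).PosSemidef ∧
      ((1 - v) • (cfc g A⁻¹)⁻¹ + v • (cfc g B⁻¹)⁻¹
          - harmMean v (cfc g A⁻¹)⁻¹ (cfc g B⁻¹)⁻¹).PosSemidef := by
  intro m A B hA hB v hv
  have hAi : (A⁻¹).PosDef := hA.inv
  have hBi : (B⁻¹).PosDef := hB.inv
  have hP : (cfc g A⁻¹).PosDef := hgpos m A⁻¹ hAi
  have hQ : (cfc g B⁻¹).PosDef := hgpos m B⁻¹ hBi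
  have hGpos : ((geomMean v A B)⁻¹).PosDef := by
    rw [geomMean_inv hA hB]
    exact geomMean_posDef hAi hBi v
  have hGi : (cfc g (geomMean v A B)⁻¹).PosDef := hgpos m _ hGpos
  have hmain : (cfc g (geomMean v A B)⁻¹
      - ((1 - v) • cfc g A⁻¹ + v • cfc g B⁻¹)).PosSemidef := by
    rw [geomMean_inv hA hB]
    exact hggc m A⁻¹ B⁻¹ hAi hBi v hv
  have hS : ((1 - v) • cfc g A⁻¹ + v • cfc g B⁻¹).PosDef := by
    rcases eq_or_lt_of_le hv.2 with h1 | h1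
    · rw [h1]
      simpa using hQ
    · exact (posDef_smul' (by linarith) hP).add_posSemidef
        (posSemidef_smul' hv.1 hQ.posSemidef)
  have hH : harmMean v (cfc g A⁻¹)⁻¹ (cfc g B⁻¹)⁻¹
      = ((1 - v) • cfc g A⁻¹ + v • cfc g B⁻¹)⁻¹ := by
    unfold harmMean
    rw [Matrix.nonsing_inv_nonsing_inv _ hP.det_pos.ne'.isUnit,
      Matrix.nonsing_inv_nonsing_inv _ hQ.det_pos.ne'.isUnit]
  refine ⟨?_, ?_⟩
  · rw [hH]
    exact inv_antitone' hS hGi hmain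
  · rw [hH]
    exact am_hm' hP hQ hv hS
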